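/- Let ν be a Borel probability measure on (𝒯,d), and for v ∈ Ṽ set p_v = ν({x ∈ 𝒯 : x(v) = 1}). Then for every y ∈ 𝒯, g(y) = ∫ d(x,y) dν(x) = Σ_{v∈Ṽ} φ(v)(p_v + (1 − 2p_v) y(v)). Moreover: (i) the function y* : Ṽ → {0,1} defined by y*(v) = 1 if and only if p_v > 1/2 is an element of 𝒯; (ii) a tree y ∈ 𝒯 belongs to the d-mean set E_d(ν) = argmin_{𝒯} g if and only if y(v) = 1 for every v with p_v > 1/2 and y(v) = 0 for every v with p_v < 1/2. -/

import Mathlib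

open MeasureTheory ENNReal

abbrev Vtx (m : ℕ) := List (Fin m)

def IsTree {m : ℕ} (x : Vtx m → Bool) : Prop :=
  ∀ (v : Vtx m) (a : Fin m), x (v ++ [a]) = true → x v = true

/-- The space 𝒯 of trees (with the Borel = product σ-field). -/
abbrev TreeSp (m : ℕ) := {x : Vtx m → Bool // IsTree x}

noncomputable def treeDist {m : ℕ} (φ : Vtx m → ℝ) (x y : Vtx m → Bool) : ℝ :=
  ∑' v : Vtx m, φ v * |(if x v then (1 : ℝ) else 0) - (if y v then (1 : ℝ) else 0)|

/-- auxiliary: the v-th term of the mean distance function. -/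
noncomputable def gTerm {m : ℕ} (φ p : Vtx m → ℝ) (y : Vtx m → Bool) (v : Vtx m) : ℝ :=
  φ v * (p v + (1 - 2 * p v) * (if y v then (1 : ℝ) else 0))

lemma gTerm_eq {m : ℕ} (φ p : Vtx m → ℝ) (y : Vtx m → Bool) (v : Vtx m) :
    gTerm φ p y v = if y v then φ v * (1 - p v) else φ v * p v := by
  unfold gTerm
  by_cases h : y v
  · rw [if_pos h, if_pos h]; ring
  · rw [if_neg h, if_neg h]; ring

lemma gTerm_nonneg {m : ℕ} {φ p : Vtx m → ℝ} (hφ : ∀ v, 0 < φ v)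
    (hp0 : ∀ v, 0 ≤ p v) (hp1 : ∀ v, p v ≤ 1) (y : Vtx m → Bool) (v : Vtx m) :
    0 ≤ gTerm φ p y v := by
  rw [gTerm_eq]
  split_ifs <;> nlinarith [hφ v, hp0 v, hp1 v]

lemma gTerm_le_phi {m : ℕ} {φ p : Vtx m → ℝ} (hφ : ∀ v, 0 < φ v)
    (hp0 : ∀ v, 0 ≤ p v) (hp1 : ∀ v, p v ≤ 1) (y : Vtx m → Bool) (v : Vtx m) :
    gTerm φ p y v ≤ φ v := by
  rw [gTerm_eq]
  split_ifs <;> nlinarith [hφ v, hp0 v, hp1 v]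

lemma gTerm_summable {m : ℕ} {φ p : Vtx m → ℝ} (hφ : ∀ v, 0 < φ v)
    (hp0 : ∀ v, 0 ≤ p v) (hp1 : ∀ v, p v ≤ 1) (hs : Summable φ) (y : Vtx m → Bool) :
    Summable (gTerm φ p y) :=
  Summable.of_nonneg_of_le (gTerm_nonneg hφ hp0 hp1 y) (gTerm_le_phi hφ hp0 hp1 y) hs

lemma gTerm_star_le {m : ℕ} {φ p : Vtx m → ℝ} (hφ : ∀ v, 0 < φ v)
    (hp0 : ∀ v, 0 ≤ p v) (hp1 : ∀ v, p v ≤ 1) (y : Vtx m → Bool) (v : Vtx m) :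
    gTerm φ p (fun w => decide (1 / 2 < p w)) v ≤ gTerm φ p y v := by
  rw [gTerm_eq, gTerm_eq]
  simp only [decide_eq_true_eq]
  split_ifs <;> nlinarith [hφ v, hp0 v, hp1 v]

theorem mean_tree_characterization (m : ℕ) (hm : 1 ≤ m) (φ : Vtx m → ℝ)
    (hφpos : ∀ v, 0 < φ v) (hφ : Summable φ)
    (ν : Measure (TreeSp m)) [IsProbabilityMeasure ν]
    (p : Vtx m → ℝ) (hp : ∀ v, p v = (ν {x : TreeSp m | x.1 v = true}).toReal) :
    (∀ y : TreeSp m,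
      (∫ x, treeDist φ x.1 y.1 ∂ν)
        = ∑' v : Vtx m, φ v * (p v + (1 - 2 * p v) * (if y.1 v then (1 : ℝ) else 0))) ∧
    (∃ ystar : Vtx m → Bool, (∀ v, ystar v = true ↔ 1 / 2 < p v) ∧ IsTree ystar) ∧
    (∀ y : TreeSp m,
      ((∀ y' : TreeSp m, (∫ x, treeDist φ x.1 y.1 ∂ν) ≤ ∫ x, treeDist φ x.1 y'.1 ∂ν)
        ↔ ((∀ v, 1 / 2 < p v → y.1 v = true) ∧ (∀ v, p v < 1 / 2 → y.1 v = false)))) := by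
  -- measurability of the evaluation sets
  have hmeas : ∀ v : Vtx m, MeasurableSet {x : TreeSp m | x.1 v = true} := by
    intro v
    have h1 : Measurable (fun x : TreeSp m => x.1 v) :=
      (measurable_pi_apply v).comp measurable_subtype_coe
    have h2 : {x : TreeSp m | x.1 v = true} = (fun x : TreeSp m => x.1 v) ⁻¹' {true} := rfl
    rw [h2]
    exact h1 (measurableSet_singleton true)
  have hp0 : ∀ v, 0 ≤ p v := fun v => by rw [hp]; exact ENNReal.toReal_nonneg
  have hp1 : ∀ v, p v ≤ 1 := by
    intro v
    rw [hp]
    have h := ENNReal.toReal_mono (ENNReal.one_ne_top)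
      (prob_le_one (μ := ν) (s := {x : TreeSp m | x.1 v = true}))
    simpa using h
  -- the indicator functions
  have hify : ∀ v : Vtx m, (fun x : TreeSp m => if x.1 v then (1 : ℝ) else 0)
      = Set.indicator {x : TreeSp m | x.1 v = true} (fun _ => (1 : ℝ)) := by
    intro v
    funext x
    by_cases h : x.1 v <;> simp [Set.indicator_apply, h]
  have hindmeas : ∀ v : Vtx m,
      Measurable (fun x : TreeSp m => if x.1 v then (1 : ℝ) else 0) := by
    intro v
    rw [hify v]
    exact measurable_const.indicator (hmeas v)
  have hint : ∀ v : Vtx m,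
      Integrable (fun x : TreeSp m => if x.1 v then (1 : ℝ) else 0) ν := by
    intro v
    rw [hify v]
    exact (integrable_const (1 : ℝ)).indicator (hmeas v)
  have hind : ∀ v : Vtx m, ∫ x : TreeSp m, (if x.1 v then (1 : ℝ) else 0) ∂ν = p v := by
    intro v
    rw [hify v, integral_indicator_const (1 : ℝ) (hmeas v), hp]
    simp
    rfl
  -- per-vertex integral
  have hterm : ∀ (y : TreeSp m) (v : Vtx m),
      ∫ x : TreeSp m,
          φ v * |(if x.1 v then (1 : ℝ) else 0) - (if y.1 v then (1 : ℝ) else 0)| ∂ν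
        = gTerm φ p y.1 v := by
    intro y v
    rw [integral_const_mul, gTerm_eq]
    by_cases hy : y.1 v
    · have he : (fun x : TreeSp m =>
          |(if x.1 v then (1 : ℝ) else 0) - (if y.1 v then (1 : ℝ) else 0)|)
          = fun x : TreeSp m => 1 - (if x.1 v then (1 : ℝ) else 0) := by
        funext x
        by_cases hx : x.1 v <;> simp [hx, hy]
      rw [he, integral_sub (integrable_const 1) (hint v), integral_const, hind, if_pos hy]
      simp
    · have he : (fun x : TreeSp m =>
          |(if x.1 v then (1 : ℝ) else 0) - (if y.1 v then (1 : ℝ) else 0)|)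
          = fun x : TreeSp m => (if x.1 v then (1 : ℝ) else 0) := by
        funext x
        by_cases hx : x.1 v <;> simp [hx, hy]
      rw [he, hind, if_neg hy]
  -- part 1: the formula for g
  have hg : ∀ y : TreeSp m,
      (∫ x, treeDist φ x.1 y.1 ∂ν) = ∑' v : Vtx m, gTerm φ p y.1 v := by
    intro y
    have hmeasf : ∀ v : Vtx m, AEStronglyMeasurable
        (fun x : TreeSp m =>
          φ v * |(if x.1 v then (1 : ℝ) else 0) - (if y.1 v then (1 : ℝ) else 0)|) ν := by
      intro v
      exact ((((hindmeas v).sub measurable_const).abs).const_mul (φ v)).aestronglyMeasurable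
    have hs : Summable fun v : Vtx m => ‖φ v‖₊ := by
      rw [← NNReal.summable_coe]
      simpa [coe_nnnorm, Real.norm_eq_abs] using hφ.abs
    have hb : ∀ v : Vtx m,
        (∫⁻ x, ‖φ v * |(if x.1 v then (1 : ℝ) else 0) -
            (if y.1 v then (1 : ℝ) else 0)|‖₊ ∂ν) ≤ (‖φ v‖₊ : ℝ≥0∞) := by
      intro v
      have hstep : ∀ x : TreeSp m,
          (‖φ v * |(if x.1 v then (1 : ℝ) else 0) -
              (if y.1 v then (1 : ℝ) else 0)|‖₊ : ℝ≥0∞) ≤ (‖φ v‖₊ : ℝ≥0∞) := by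
        intro x
        refine ENNReal.coe_le_coe.mpr ?_
        rw [← NNReal.coe_le_coe]
        simp only [coe_nnnorm, Real.norm_eq_abs, abs_mul, abs_abs]
        have h1 : |(if x.1 v then (1 : ℝ) else 0) - (if y.1 v then (1 : ℝ) else 0)| ≤ 1 := by
          by_cases hx : x.1 v <;> by_cases hy : y.1 v <;> simp [hx, hy]
        calc |φ v| * |(if x.1 v then (1 : ℝ) else 0) - (if y.1 v then (1 : ℝ) else 0)|
            ≤ |φ v| * 1 := mul_le_mul_of_nonneg_left h1 (abs_nonneg _)
          _ = |φ v| := mul_one _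
      calc (∫⁻ x, ‖φ v * |(if x.1 v then (1 : ℝ) else 0) -
              (if y.1 v then (1 : ℝ) else 0)|‖₊ ∂ν)
          ≤ ∫⁻ _, (‖φ v‖₊ : ℝ≥0∞) ∂ν := lintegral_mono hstep
        _ = (‖φ v‖₊ : ℝ≥0∞) := by simp
    have hlint : (∑' v : Vtx m, ∫⁻ x, ‖φ v * |(if x.1 v then (1 : ℝ) else 0) -
        (if y.1 v then (1 : ℝ) else 0)|‖₊ ∂ν) ≠ ⊤ :=
      ne_top_of_le_ne_top (ENNReal.tsum_coe_ne_top_iff_summable.mpr hs)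
        (ENNReal.tsum_le_tsum hb)
    calc (∫ x, treeDist φ x.1 y.1 ∂ν)
        = ∑' v : Vtx m, ∫ x : TreeSp m,
            φ v * |(if x.1 v then (1 : ℝ) else 0) - (if y.1 v then (1 : ℝ) else 0)| ∂ν := by
          simp only [treeDist]
          exact integral_tsum hmeasf hlint
      _ = ∑' v : Vtx m, gTerm φ p y.1 v := tsum_congr (hterm y)
  -- monotonicity of p
  have hpmono : ∀ (v : Vtx m) (a : Fin m), p (v ++ [a]) ≤ p v := by
    intro v a
    rw [hp, hp]
    exact ENNReal.toReal_mono (measure_ne_top ν _)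
      (measure_mono fun x hx => x.2 v a hx)
  -- the optimal tree
  have htree : IsTree (fun w : Vtx m => decide (1 / 2 < p w)) := by
    intro v a h
    simp only [decide_eq_true_eq] at h ⊢
    exact lt_of_lt_of_le h (hpmono v a)
  have Ystar : TreeSp m := ⟨fun w => decide (1 / 2 < p w), htree⟩
  refine ⟨hg, ⟨fun w => decide (1 / 2 < p w), fun v => by simp, htree⟩, ?_⟩
  intro y
  constructor
  · -- minimizer → conditions
    intro hmin
    have h1 : (∫ x, treeDist φ x.1 y.1 ∂ν)
        ≤ ∫ x, treeDist φ x.1 (⟨fun w => decide (1 / 2 < p w), htree⟩ : TreeSp m).1 ∂ν :=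
      hmin _
    rw [hg y, hg _] at h1
    have h2 : (∑' v : Vtx m, gTerm φ p (fun w => decide (1 / 2 < p w)) v)
        ≤ ∑' v : Vtx m, gTerm φ p y.1 v :=
      Summable.tsum_le_tsum (fun v => gTerm_star_le hφpos hp0 hp1 y.1 v)
        (gTerm_summable hφpos hp0 hp1 hφ _) (gTerm_summable hφpos hp0 hp1 hφ _)
    have heq : (∑' v : Vtx m, gTerm φ p (fun w => decide (1 / 2 < p w)) v)
        = ∑' v : Vtx m, gTerm φ p y.1 v := le_antisymm h2 h1
    have hpt : ∀ v, gTerm φ p (fun w => decide (1 / 2 < p w)) v = gTerm φ p y.1 v := by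
      intro v
      by_contra hne
      have hlt : gTerm φ p (fun w => decide (1 / 2 < p w)) v < gTerm φ p y.1 v :=
        lt_of_le_of_ne (gTerm_star_le hφpos hp0 hp1 y.1 v) hne
      have hst := Summable.tsum_lt_tsum (fun w => gTerm_star_le hφpos hp0 hp1 y.1 w) hlt
        (gTerm_summable hφpos hp0 hp1 hφ _) (gTerm_summable hφpos hp0 hp1 hφ _)
      exact absurd heq (ne_of_lt hst)
    constructor
    · intro v hv
      by_contra hne
      have hyv : ¬ (y.1 v = true) := hne
      have hthis := hpt v
      rw [gTerm_eq, gTerm_eq] at hthis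
      rw [if_pos (show (fun w => decide (1 / 2 < p w)) v = true from decide_eq_true hv),
        if_neg hyv] at hthis
      nlinarith [mul_pos (hφpos v) (show (0:ℝ) < 2 * p v - 1 by linarith)]
    · intro v hv
      by_contra hne
      have hyv : y.1 v = true := by
        cases h : y.1 v
        · exact absurd h hne
        · rfl
      have hnv : ¬ (1 / 2 < p v) := by linarith
      have hthis := hpt v
      rw [gTerm_eq, gTerm_eq] at hthis
      rw [if_neg (show ¬ ((fun w => decide (1 / 2 < p w)) v = true) by
          simp only [decide_eq_true_eq]; exact hnv),
        if_pos hyv] at hthis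
      nlinarith [mul_pos (hφpos v) (show (0:ℝ) < 1 - 2 * p v by linarith)]
  · -- conditions → minimizer
    rintro ⟨hc1, hc2⟩ y'
    rw [hg y, hg y']
    refine Summable.tsum_le_tsum (fun v => ?_) (gTerm_summable hφpos hp0 hp1 hφ _)
      (gTerm_summable hφpos hp0 hp1 hφ _)
    rw [gTerm_eq, gTerm_eq]
    rcases lt_trichotomy (p v) (1 / 2) with hv | hv | hv
    · rw [hc2 v hv, if_neg (Bool.false_ne_true)]
      by_cases hy' : y'.1 v
      · rw [if_pos hy']
        nlinarith [mul_pos (hφpos v) (show (0:ℝ) < 1 - 2 * p v by linarith)]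
      · rw [if_neg hy']
    · have h12 : (1 : ℝ) - p v = p v := by linarith
      rw [h12]
      split_ifs <;> exact le_rfl
    · rw [hc1 v hv, if_pos rfl]
      by_cases hy' : y'.1 v
      · rw [if_pos hy']
      · rw [if_neg hy']
        nlinarith [mul_pos (hφpos v) (show (0:ℝ) < 2 * p v - 1 by linarith)]
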